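/- arXiv:1311.6418 — 2 statements merged into one kernel-verified Lean document; each statement's English description precedes it below -/
import Mathlib

section
/- For all ρ > 0 one has ρ·coth(ρ) − 1 ≥ 3ρ²/(π² + ρ²). -/
noncomputable def Gaux : ℝ → ℝ := fun x => (Real.pi^2 - 8 + x^2) * Real.sinh x - x * Real.cosh x

noncomputable def Faux : ℝ → ℝ := fun x => x * (Real.pi^2 + x^2) * Real.cosh x - (Real.pi^2 + 4*x^2) * Real.sinh x

lemma Gaux_deriv (x : ℝ) : HasDerivAt Gaux (x * Real.sinh x + (Real.pi^2 - 9 + x^2) * Real.cosh x) x := by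
  have h1 : HasDerivAt (fun x : ℝ => Real.pi^2 - 8 + x^2) (2*x) x := by
    simpa using (hasDerivAt_pow 2 x).const_add (Real.pi^2 - 8)
  have h := (h1.mul (Real.hasDerivAt_sinh x)).sub ((hasDerivAt_id' x).mul (Real.hasDerivAt_cosh x))
  exact h.congr_deriv (by ring)

lemma pi_sq_gt_nine : (9 : ℝ) < Real.pi ^ 2 := by
  nlinarith [Real.pi_gt_three]

lemma Gaux_nonneg {x : ℝ} (hx : 0 ≤ x) : 0 ≤ Gaux x := by
  have hmono : MonotoneOn Gaux (Set.Ici 0) := by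
    apply monotoneOn_of_deriv_nonneg (convex_Ici 0)
    · exact fun y _ => (Gaux_deriv y).continuousAt.continuousWithinAt
    · intro y _
      exact (Gaux_deriv y).differentiableAt.differentiableWithinAt
    · intro y hy
      rw [interior_Ici] at hy
      rw [(Gaux_deriv y).deriv]
      have h1 : 0 ≤ Real.sinh y := Real.sinh_nonneg_iff.mpr hy.le
      have h2 : 0 < Real.cosh y := Real.cosh_pos y
      nlinarith [pi_sq_gt_nine, sq_nonneg y, (Set.mem_Ioi.mp hy).le]
  have h0 : Gaux 0 = 0 := by simp [Gaux]
  have := hmono (Set.self_mem_Ici) (Set.mem_Ici.mpr hx) hx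
  linarith [this, h0.ge]

lemma Faux_deriv (x : ℝ) : HasDerivAt Faux (x * Gaux x) x := by
  have h1 : HasDerivAt (fun x : ℝ => x * (Real.pi^2 + x^2)) (Real.pi^2 + 3*x^2) x := by
    have h2 : HasDerivAt (fun x : ℝ => Real.pi^2 + x^2) (2*x) x := by
      simpa using (hasDerivAt_pow 2 x).const_add (Real.pi^2)
    have := (hasDerivAt_id' x).mul h2
    exact this.congr_deriv (by ring)
  have h3 : HasDerivAt (fun x : ℝ => Real.pi^2 + 4*x^2) (8*x) x := by
    have := ((hasDerivAt_pow 2 x).const_mul (4:ℝ)).const_add (Real.pi^2)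
    exact this.congr_deriv (by ring)
  have h := (h1.mul (Real.hasDerivAt_cosh x)).sub (h3.mul (Real.hasDerivAt_sinh x))
  exact h.congr_deriv (by simp only [Gaux]; ring)

lemma Faux_nonneg {x : ℝ} (hx : 0 ≤ x) : 0 ≤ Faux x := by
  have hmono : MonotoneOn Faux (Set.Ici 0) := by
    apply monotoneOn_of_deriv_nonneg (convex_Ici 0)
    · exact fun y _ => (Faux_deriv y).continuousAt.continuousWithinAt
    · intro y _
      exact (Faux_deriv y).differentiableAt.differentiableWithinAt
    · intro y hy
      rw [interior_Ici] at hy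
      rw [(Faux_deriv y).deriv]
      exact mul_nonneg hy.le (Gaux_nonneg hy.le)
  have h0 : Faux 0 = 0 := by simp [Faux]
  have := hmono (Set.self_mem_Ici) (Set.mem_Ici.mpr hx) hx
  linarith [this, h0.ge]

theorem coth_sub_one_ge (ρ : ℝ) (hρ : 0 < ρ) :
    ρ * (Real.cosh ρ / Real.sinh ρ) - 1 ≥ 3 * ρ ^ 2 / (Real.pi ^ 2 + ρ ^ 2) := by
  have hs : 0 < Real.sinh ρ := Real.sinh_pos_iff.mpr hρ
  have hd : 0 < Real.pi ^ 2 + ρ ^ 2 := by positivity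
  rw [ge_iff_le, ← sub_nonneg]
  have key : ρ * (Real.cosh ρ / Real.sinh ρ) - 1 - 3 * ρ ^ 2 / (Real.pi ^ 2 + ρ ^ 2)
      = Faux ρ / (Real.sinh ρ * (Real.pi ^ 2 + ρ ^ 2)) := by
    simp only [Faux]
    field_simp
    ring
  rw [key]
  exact div_nonneg (Faux_nonneg hρ.le) (by positivity)
end

section
/- Extremality of the interpolation inequality in ℝⁿ: let 0 < q < 2 < p and 2 < n < 2(p−q)/(p−2). For λ > 0 set w_λ(x) = (λ + |x|^{2−q})^{1/(2−p)}. Then (∫_{ℝⁿ} |∇w_λ|² dx)·(∫_{ℝⁿ} w_λ^{2p−2}/|x|^{2q−2} dx) = ((n−q)²/p²)·(∫_{ℝⁿ} w_λ^p/|x|^q dx)². -/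
open MeasureTheory Set Real InnerProductSpace

lemma aux_contOn (lam s t : ℝ) {α : ℝ} (hlam : 0 < lam) (hα : 0 < α) :
    ContinuousOn (fun r : ℝ => r ^ s * (lam + r ^ α) ^ t) (Ioi 0) := by
  intro r hr
  have hr0 : r ≠ 0 := ne_of_gt hr
  have h1 : ContinuousAt (fun r : ℝ => r ^ s) r :=
    Real.continuousAt_rpow_const r s (Or.inl hr0)
  have hbase : ContinuousAt (fun r : ℝ => lam + r ^ α) r :=
    continuousAt_const.add (Real.continuousAt_rpow_const r α (Or.inl hr0))
  have hrp : (0:ℝ) < r := hr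
  have hne : lam + r ^ α ≠ 0 := by positivity
  have h2 : ContinuousAt (fun r : ℝ => (lam + r ^ α) ^ t) r := hbase.rpow_const (Or.inl hne)
  exact (h1.mul h2).continuousWithinAt

lemma aux_integrableOn (lam : ℝ) {α s t : ℝ} (hlam : 0 < lam) (hα : 0 < α) (ht : t ≤ 0)
    (hs : -1 < s) (hst : s + α * t < -1) :
    IntegrableOn (fun r : ℝ => r ^ s * (lam + r ^ α) ^ t) (Ioi 0) := by
  have hmeas : ∀ u ⊆ Ioi (0:ℝ), MeasurableSet u →
      AEStronglyMeasurable (fun r : ℝ => r ^ s * (lam + r ^ α) ^ t) (volume.restrict u) :=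
    fun u hu hmu => ((aux_contOn lam s t hlam hα).mono hu).aestronglyMeasurable hmu
  have : Ioi (0:ℝ) = Ioc 0 1 ∪ Ioi 1 := (Ioc_union_Ioi_eq_Ioi zero_le_one).symm
  rw [this]
  apply IntegrableOn.union
  · -- on Ioc 0 1, dominate by lam^t * r^s
    have hint : IntegrableOn (fun r : ℝ => lam ^ t * r ^ s) (Ioc 0 1) := by
      apply Integrable.const_mul
      have := (intervalIntegral.intervalIntegrable_rpow' (a := 0) (b := 1) hs)
      rwa [intervalIntegrable_iff_integrableOn_Ioc_of_le zero_le_one] at this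
    refine Integrable.mono' hint (hmeas _ Ioc_subset_Ioi_self measurableSet_Ioc) ?_
    filter_upwards [ae_restrict_mem measurableSet_Ioc] with r hr
    have hr0 : 0 < r := hr.1
    rw [Real.norm_eq_abs, abs_mul, abs_of_nonneg (rpow_nonneg hr0.le s),
      abs_of_nonneg (rpow_nonneg (by positivity) t), mul_comm ((lam:ℝ) ^ t)]
    exact mul_le_mul_of_nonneg_left
      (Real.rpow_le_rpow_of_nonpos hlam (le_add_of_nonneg_right (rpow_nonneg hr0.le α)) ht)
      (rpow_nonneg hr0.le s)
  · -- on Ioi 1, dominate by r^(s + α*t)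
    have hint : IntegrableOn (fun r : ℝ => r ^ (s + α * t)) (Ioi 1) :=
      integrableOn_Ioi_rpow_of_lt hst zero_lt_one
    refine Integrable.mono' hint (hmeas _ (fun r hr => mem_Ioi.mpr (lt_trans zero_lt_one (mem_Ioi.mp hr))) measurableSet_Ioi) ?_
    filter_upwards [ae_restrict_mem measurableSet_Ioi] with r hr
    have hr1 : (1:ℝ) < r := hr
    have hr0 : (0:ℝ) < r := lt_trans zero_lt_one hr1
    have h1 : (lam + r ^ α) ^ t ≤ (r ^ α) ^ t :=
      Real.rpow_le_rpow_of_nonpos (rpow_pos_of_pos hr0 α) (by linarith) ht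
    rw [← Real.rpow_mul hr0.le] at h1
    rw [Real.norm_eq_abs, abs_mul, abs_of_nonneg (rpow_nonneg hr0.le s),
      abs_of_nonneg (rpow_nonneg (by positivity) t), Real.rpow_add hr0]
    exact mul_le_mul_of_nonneg_left h1 (rpow_nonneg hr0.le s)

lemma aux_ibp (lam : ℝ) {α β s : ℝ} (hlam : 0 < lam) (hα : 0 < α) (hβ : β < 0)
    (hs : 0 < s) (hdecay : s + α * β < 0) :
    ∫ r in Ioi (0:ℝ), r ^ (s - 1) * (lam + r ^ α) ^ β
      = (-(α * β) / s) * ∫ r in Ioi (0:ℝ), r ^ (s + α - 1) * (lam + r ^ α) ^ (β - 1) := by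
  set F : ℝ → ℝ := fun r => (1 / s) * (r ^ s * (lam + r ^ α) ^ β) with hF
  set F' : ℝ → ℝ := fun r =>
    (1 / s) * ((s * r ^ (s - 1)) * (lam + r ^ α) ^ β
      + r ^ s * (α * r ^ (α - 1) * β * (lam + r ^ α) ^ (β - 1))) with hF'
  have hfi : IntegrableOn (fun r : ℝ => r ^ (s - 1) * (lam + r ^ α) ^ β) (Ioi 0) :=
    aux_integrableOn lam hlam hα hβ.le (by linarith) (by linarith)
  have hgi : IntegrableOn (fun r : ℝ => r ^ (s + α - 1) * (lam + r ^ α) ^ (β - 1)) (Ioi 0) :=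
    aux_integrableOn lam hlam hα (by linarith) (by nlinarith) (by nlinarith)
  have hEq : ∀ r ∈ Ioi (0:ℝ), F' r
      = r ^ (s - 1) * (lam + r ^ α) ^ β
        + (α * β) / s * (r ^ (s + α - 1) * (lam + r ^ α) ^ (β - 1)) := by
    intro r hr
    have hr0 : (0:ℝ) < r := hr
    have h1 : r ^ s * r ^ (α - 1) = r ^ (s + α - 1) := by
      rw [← Real.rpow_add hr0]; ring_nf
    simp only [hF']
    field_simp
    linear_combination (α * β * (lam + r ^ α) ^ (β - 1)) * h1
  have hderiv : ∀ r ∈ Ioi (0:ℝ), HasDerivAt F (F' r) r := by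
    intro r hr
    have hr0 : (0:ℝ) < r := hr
    have h1 : HasDerivAt (fun r : ℝ => r ^ s) (s * r ^ (s - 1)) r :=
      Real.hasDerivAt_rpow_const (Or.inl hr0.ne')
    have h2 : HasDerivAt (fun r : ℝ => lam + r ^ α) (α * r ^ (α - 1)) r := by
      simpa using (Real.hasDerivAt_rpow_const (p := α) (Or.inl hr0.ne')).const_add lam
    have hbpos : (0:ℝ) < lam + r ^ α := by positivity
    have h3 : HasDerivAt (fun r : ℝ => (lam + r ^ α) ^ β)
        ((α * r ^ (α - 1)) * β * (lam + r ^ α) ^ (β - 1)) r :=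
      h2.rpow_const (Or.inl hbpos.ne')
    exact (h1.mul h3).const_mul (1 / s)
  have hcont : ContinuousWithinAt F (Ici (0:ℝ)) 0 := by
    have hc1 : ContinuousAt (fun r : ℝ => r ^ s) 0 :=
      Real.continuousAt_rpow_const 0 s (Or.inr hs.le)
    have hb : ContinuousAt (fun r : ℝ => lam + r ^ α) 0 :=
      continuousAt_const.add (Real.continuousAt_rpow_const 0 α (Or.inr hα.le))
    have hne : lam + (0:ℝ) ^ α ≠ 0 := by
      simp [Real.zero_rpow hα.ne', hlam.ne']
    have hc2 : ContinuousAt (fun r : ℝ => (lam + r ^ α) ^ β) 0 := hb.rpow_const (Or.inl hne)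
    have hc3 : ContinuousAt F 0 := (hc1.mul hc2).const_mul (1/s)
    exact hc3.continuousWithinAt
  have htop : Filter.Tendsto F Filter.atTop (nhds 0) := by
    have hb : Filter.Tendsto (fun r : ℝ => (1/s) * r ^ (s + α * β)) Filter.atTop (nhds 0) := by
      have h := tendsto_rpow_neg_atTop (y := -(s + α * β)) (by linarith)
      rw [neg_neg] at h
      simpa using h.const_mul (1/s)
    apply squeeze_zero' ?_ ?_ hb
    · filter_upwards [Filter.eventually_gt_atTop 0] with r hr
      have : (0:ℝ) < lam + r ^ α := by positivity
      positivity
    · filter_upwards [Filter.eventually_gt_atTop 0] with r hr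
      have h1 : (lam + r ^ α) ^ β ≤ (r ^ α) ^ β :=
        Real.rpow_le_rpow_of_nonpos (rpow_pos_of_pos hr α) (le_add_of_nonneg_left hlam.le) hβ.le
      rw [← Real.rpow_mul hr.le] at h1
      calc F r ≤ (1/s) * (r ^ s * r ^ (α*β)) := by
            apply mul_le_mul_of_nonneg_left _ (by positivity)
            exact mul_le_mul_of_nonneg_left h1 (rpow_nonneg hr.le s)
        _ = (1/s) * r ^ (s + α * β) := by rw [← Real.rpow_add hr]
  have hF'int : IntegrableOn F' (Ioi 0) :=
    IntegrableOn.congr_fun (hfi.add (hgi.const_mul ((α*β)/s)))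
      (fun r hr => (hEq r hr).symm) measurableSet_Ioi
  have h0 : F 0 = 0 := by simp [hF, Real.zero_rpow hs.ne']
  have key := integral_Ioi_of_hasDerivAt_of_tendsto hcont hderiv hF'int htop
  rw [h0, sub_zero] at key
  have h2 : (∫ r in Ioi (0:ℝ), F' r)
      = (∫ r in Ioi (0:ℝ), r ^ (s-1) * (lam + r^α) ^ β)
        + (α*β)/s * ∫ r in Ioi (0:ℝ), r ^ (s+α-1) * (lam + r^α) ^ (β-1) := by
    rw [setIntegral_congr_fun measurableSet_Ioi hEq,
      integral_add hfi (hgi.const_mul _), integral_const_mul]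
  rw [h2] at key
  have h3 : -(α*β)/s * (∫ r in Ioi (0:ℝ), r ^ (s+α-1) * (lam + r^α) ^ (β-1))
      = -((α*β)/s * ∫ r in Ioi (0:ℝ), r ^ (s+α-1) * (lam + r^α) ^ (β-1)) := by ring
  rw [h3]
  linarith

lemma aux_gradient {E : Type*} [NormedAddCommGroup E] [InnerProductSpace ℝ E] [CompleteSpace E]
    (lam a b : ℝ) (hlam : 0 < lam) (ha : 0 < a) {x : E} (hx : x ≠ 0) :
    ‖gradient (fun y : E => (lam + ‖y‖ ^ a) ^ b) x‖ ^ 2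
      = (a * b) ^ 2 * ((lam + ‖x‖ ^ a) ^ (2 * b - 2) * ‖x‖ ^ (2 * a - 2)) := by
  have hr : (0 : ℝ) < ‖x‖ := norm_pos_iff.mpr hx
  have ht0 : (0 : ℝ) < ‖x‖ ^ (2:ℝ) := Real.rpow_pos_of_pos hr 2
  have hA : (0 : ℝ) < lam + ‖x‖ ^ a := by positivity
  set m : ℝ := a / 2 with hm
  -- derivative of the scalar profile t ↦ (lam + t ^ m) ^ b at t₀ = ‖x‖ ^ 2
  have hAm : (‖x‖ ^ (2:ℝ)) ^ m = ‖x‖ ^ a := by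
    rw [← Real.rpow_mul (norm_nonneg x)]
    congr 1
    rw [hm]; ring
  have h2 : HasDerivAt (fun t : ℝ => lam + t ^ m) (m * (‖x‖ ^ (2:ℝ)) ^ (m - 1)) (‖x‖ ^ (2:ℝ)) := by
    simpa using (Real.hasDerivAt_rpow_const (p := m) (Or.inl ht0.ne')).const_add lam
  have hAm' : lam + (‖x‖ ^ (2:ℝ)) ^ m ≠ 0 := by rw [hAm]; exact hA.ne'
  have h3 : HasDerivAt (fun t : ℝ => (lam + t ^ m) ^ b)
      ((m * (‖x‖ ^ (2:ℝ)) ^ (m - 1)) * b * (lam + (‖x‖ ^ (2:ℝ)) ^ m) ^ (b - 1)) (‖x‖ ^ (2:ℝ)) :=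
    h2.rpow_const (Or.inl hAm')
  have h4 : HasFDerivAt (fun y : E => ‖y‖ ^ (2:ℝ)) (((2:ℝ) * ‖x‖ ^ ((2:ℝ) - 2)) • innerSL ℝ x) x :=
    hasFDerivAt_norm_rpow x one_lt_two
  have h5 := h3.comp_hasFDerivAt x h4
  set c : ℝ := (m * (‖x‖ ^ (2:ℝ)) ^ (m - 1)) * b * (lam + (‖x‖ ^ (2:ℝ)) ^ m) ^ (b - 1)
      * ((2:ℝ) * ‖x‖ ^ ((2:ℝ) - 2)) with hc
  have h6 : HasFDerivAt (fun y : E => (lam + ‖y‖ ^ a) ^ b) (c • innerSL ℝ x) x := by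
    have heq : (fun y : E => (fun t : ℝ => (lam + t ^ m) ^ b) (‖y‖ ^ (2:ℝ)))
        = fun y : E => (lam + ‖y‖ ^ a) ^ b := by
      funext y
      have : (‖y‖ ^ (2:ℝ)) ^ m = ‖y‖ ^ a := by
        rw [← Real.rpow_mul (norm_nonneg y)]
        congr 1
        rw [hm]; ring
      show (lam + (‖y‖ ^ (2:ℝ)) ^ m) ^ b = (lam + ‖y‖ ^ a) ^ b
      rw [this]
    rw [← heq]
    rw [hc, ← smul_smul]
    exact h5
  have h7 : HasGradientAt (fun y : E => (lam + ‖y‖ ^ a) ^ b) (c • x) x := by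
    rw [hasGradientAt_iff_hasFDerivAt]
    have hd : (toDual ℝ E) (c • x) = c • innerSL ℝ x := by
      ext y
      simp [toDual_apply_apply, inner_smul_left, innerSL_apply_apply]
    rw [hd]
    exact h6
  rw [h7.gradient]
  -- now compute the norm
  have hnorm : ‖c • x‖ = |c| * ‖x‖ := by rw [norm_smul, Real.norm_eq_abs]
  rw [hnorm]
  have hxpow : ‖x‖ ^ ((2:ℝ) - 2) = 1 := by norm_num [Real.rpow_zero]
  have hcval : c = (a * b) * ((lam + ‖x‖ ^ a) ^ (b - 1) * ‖x‖ ^ (a - 2)) := by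
    rw [hc, hAm, hxpow]
    have : (‖x‖ ^ (2:ℝ)) ^ (m - 1) = ‖x‖ ^ (a - 2) := by
      rw [← Real.rpow_mul (norm_nonneg x)]
      congr 1
      rw [hm]; ring
    rw [this]; ring
  rw [mul_pow, sq_abs, hcval]
  have e1 : ((lam + ‖x‖ ^ a) ^ (b-1)) ^ 2 = (lam + ‖x‖ ^ a) ^ (2*b - 2) := by
    rw [← Real.rpow_natCast ((lam + ‖x‖ ^ a) ^ (b-1)) 2, ← Real.rpow_mul hA.le]
    norm_num; ring_nf
  have e2 : (‖x‖ ^ (a-2)) ^ 2 = ‖x‖ ^ (2*a - 4) := by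
    rw [← Real.rpow_natCast (‖x‖ ^ (a-2)) 2, ← Real.rpow_mul (norm_nonneg x)]
    norm_num; ring_nf
  have e3 : ‖x‖ ^ (2*a-4) * ‖x‖ ^ (2:ℕ) = ‖x‖ ^ (2*a - 2) := by
    rw [← Real.rpow_natCast ‖x‖ 2, ← Real.rpow_add hr]
    ring_nf
  calc ((a*b) * ((lam + ‖x‖ ^ a) ^ (b-1) * ‖x‖ ^ (a-2))) ^ 2 * ‖x‖ ^ 2
      = (a*b)^2 * (((lam + ‖x‖ ^ a) ^ (b-1))^2 * ((‖x‖ ^ (a-2))^2 * ‖x‖ ^ 2)) := by ring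
    _ = (a * b) ^ 2 * ((lam + ‖x‖ ^ a) ^ (2 * b - 2) * ‖x‖ ^ (2 * a - 2)) := by
        rw [e1, e2, ← e3]

lemma aux_polar (n : ℕ) (hn : 0 < n) (f : ℝ → ℝ) :
    ∫ x : EuclideanSpace ℝ (Fin n), f ‖x‖
      = ((n : ℝ) * (volume (Metric.ball (0 : EuclideanSpace ℝ (Fin n)) 1)).toReal)
          * ∫ r in Ioi (0:ℝ), r ^ (n - 1 : ℕ) * f r := by
  haveI : Nontrivial (EuclideanSpace ℝ (Fin n)) := by
    refine ⟨⟨EuclideanSpace.single (⟨0, hn⟩ : Fin n) (1:ℝ), 0, fun h => ?_⟩⟩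
    have h0 : (EuclideanSpace.single (⟨0, hn⟩ : Fin n) (1:ℝ)) ⟨0, hn⟩ = (0 : EuclideanSpace ℝ (Fin n)) ⟨0, hn⟩ := by rw [h]
    rw [EuclideanSpace.single_apply] at h0
    simpa using h0
  rw [MeasureTheory.integral_fun_norm_addHaar volume f]
  simp only [finrank_euclideanSpace_fin, nsmul_eq_mul, smul_eq_mul]
  rw [mul_assoc]
  rfl

theorem interpolation_extremal (n : ℕ) (p q : ℝ)
    (hq : 0 < q) (hq2 : q < 2) (hp : 2 < p)
    (hn : 2 < (n : ℝ)) (hn' : (n : ℝ) < 2 * (p - q) / (p - 2))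
    (lam : ℝ) (hlam : 0 < lam) :
    (∫ x : EuclideanSpace ℝ (Fin n),
        ‖gradient (fun y : EuclideanSpace ℝ (Fin n) =>
          (lam + ‖y‖ ^ (2 - q)) ^ (1 / (2 - p))) x‖ ^ 2) *
      (∫ x : EuclideanSpace ℝ (Fin n),
        ((lam + ‖x‖ ^ (2 - q)) ^ (1 / (2 - p))) ^ (2 * p - 2) / ‖x‖ ^ (2 * q - 2)) =
      (((n : ℝ) - q) ^ 2 / p ^ 2) *
        (∫ x : EuclideanSpace ℝ (Fin n),
          ((lam + ‖x‖ ^ (2 - q)) ^ (1 / (2 - p))) ^ p / ‖x‖ ^ q) ^ 2 := by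
  have hn2 : 2 < n := by exact_mod_cast hn
  have hn0 : 0 < n := by omega
  haveI : Nontrivial (EuclideanSpace ℝ (Fin n)) := by
    refine ⟨⟨EuclideanSpace.single (⟨0, hn0⟩ : Fin n) (1:ℝ), 0, fun h => ?_⟩⟩
    have h0 : (EuclideanSpace.single (⟨0, hn0⟩ : Fin n) (1:ℝ)) ⟨0, hn0⟩ = (0 : EuclideanSpace ℝ (Fin n)) ⟨0, hn0⟩ := by rw [h]
    rw [EuclideanSpace.single_apply] at h0
    simpa using h0
  set E := EuclideanSpace ℝ (Fin n) with hE
  have hp2 : (0:ℝ) < p - 2 := by linarith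
  have h2p : 2 - p < 0 := by linarith
  have h2pne : 2 - p ≠ 0 := h2p.ne
  have hα : (0:ℝ) < 2 - q := by linarith
  have hβ : 1 / (2 - p) < 0 := div_neg_of_pos_of_neg one_pos h2p
  have hnq : (0:ℝ) < (n:ℝ) - q := by linarith
  have hbp : 1 / (2 - p) * p < 0 := mul_neg_of_neg_of_pos hβ (by linarith)
  have hn'' : (n:ℝ) * (p - 2) < 2 * (p - q) := (lt_div_iff₀ hp2).mp hn'
  have hdecay : ((n:ℝ) - q) + (2 - q) * (1 / (2 - p) * p) < 0 := by
    have heq : ((n:ℝ) - q) + (2 - q) * (1 / (2 - p) * p)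
        = (((n:ℝ) - q) * (2 - p) + (2 - q) * p) / (2 - p) := by field_simp
    rw [heq]
    apply div_neg_of_pos_of_neg _ h2p
    nlinarith
  -- a.e. nonvanishing
  have hae : ∀ᵐ x : E ∂volume, x ≠ 0 := by
    rw [MeasureTheory.ae_iff]
    have hset : {x : E | ¬ x ≠ 0} = {0} := by ext x; simp
    rw [hset]
    exact measure_singleton 0
  -- Step 1 : the gradient integral
  have hQ : (∫ x : E, ‖gradient (fun y : E =>
        (lam + ‖y‖ ^ (2 - q)) ^ (1 / (2 - p))) x‖ ^ 2)
      = ((2 - q) * (1 / (2 - p))) ^ 2 *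
        ∫ x : E, ((lam + ‖x‖ ^ (2 - q)) ^ (1 / (2 - p))) ^ (2 * p - 2) / ‖x‖ ^ (2 * q - 2) := by
    rw [← integral_const_mul]
    apply integral_congr_ae
    filter_upwards [hae] with x hx
    rw [aux_gradient lam (2-q) (1/(2-p)) hlam hα hx]
    have hA : (0:ℝ) < lam + ‖x‖ ^ (2-q) := by positivity
    have hrx : (0:ℝ) < ‖x‖ := norm_pos_iff.mpr hx
    have e1 : (lam + ‖x‖ ^ (2-q)) ^ (2 * (1/(2-p)) - 2)
        = ((lam + ‖x‖ ^ (2-q)) ^ (1/(2-p))) ^ (2*p - 2) := by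
      rw [← Real.rpow_mul hA.le]
      congr 1
      field_simp
      ring
    have e2 : ‖x‖ ^ (2 * (2-q) - 2) = (‖x‖ ^ (2*q - 2))⁻¹ := by
      rw [← Real.rpow_neg (norm_nonneg x)]
      congr 1
      ring
    rw [e1, e2]
    ring
  -- Step 2 : polar coordinates for P and R
  set C : ℝ := (n : ℝ) * (volume (Metric.ball (0 : E) 1)).toReal with hC
  have hcast : ((n - 1 : ℕ) : ℝ) = (n:ℝ) - 1 := by
    rw [Nat.cast_sub (by omega)]; norm_num
  have hRpolar : (∫ x : E, ((lam + ‖x‖ ^ (2 - q)) ^ (1 / (2 - p))) ^ (2 * p - 2) / ‖x‖ ^ (2 * q - 2))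
      = C * ∫ r in Ioi (0:ℝ),
          r ^ (((n:ℝ) - q) + (2 - q) - 1) * (lam + r ^ (2 - q)) ^ ((1 / (2 - p) * p) - 1) := by
    have h1 := aux_polar n hn0
      (fun r : ℝ => ((lam + r ^ (2 - q)) ^ (1 / (2 - p))) ^ (2 * p - 2) / r ^ (2 * q - 2))
    rw [h1]
    congr 1
    apply setIntegral_congr_fun measurableSet_Ioi
    intro r hr
    have hr0 : (0:ℝ) < r := hr
    have hA : (0:ℝ) < lam + r ^ (2-q) := by positivity
    have e1 : ((lam + r ^ (2-q)) ^ (1/(2-p))) ^ (2*p - 2)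
        = (lam + r ^ (2-q)) ^ ((1 / (2 - p) * p) - 1) := by
      rw [← Real.rpow_mul hA.le]
      congr 1
      field_simp
      ring
    have e2 : (r:ℝ) ^ (n - 1 : ℕ) = r ^ ((n:ℝ) - 1) := by
      rw [← Real.rpow_natCast r (n-1), hcast]
    have e3 : r ^ ((n:ℝ)-1) / r ^ (2*q-2) = r ^ (((n:ℝ) - q) + (2 - q) - 1) := by
      rw [← Real.rpow_sub hr0]
      congr 1
      ring
    show r ^ (n - 1 : ℕ) * (((lam + r ^ (2 - q)) ^ (1 / (2 - p))) ^ (2 * p - 2) / r ^ (2 * q - 2))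
      = r ^ (((n:ℝ) - q) + (2 - q) - 1) * (lam + r ^ (2 - q)) ^ ((1 / (2 - p) * p) - 1)
    rw [e1, e2, ← e3]
    ring
  have hPpolar : (∫ x : E, ((lam + ‖x‖ ^ (2 - q)) ^ (1 / (2 - p))) ^ p / ‖x‖ ^ q)
      = C * ∫ r in Ioi (0:ℝ),
          r ^ (((n:ℝ) - q) - 1) * (lam + r ^ (2 - q)) ^ (1 / (2 - p) * p) := by
    have h1 := aux_polar n hn0
      (fun r : ℝ => ((lam + r ^ (2 - q)) ^ (1 / (2 - p))) ^ p / r ^ q)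
    rw [h1]
    congr 1
    apply setIntegral_congr_fun measurableSet_Ioi
    intro r hr
    have hr0 : (0:ℝ) < r := hr
    have hA : (0:ℝ) < lam + r ^ (2-q) := by positivity
    have e1 : ((lam + r ^ (2-q)) ^ (1/(2-p))) ^ p = (lam + r ^ (2-q)) ^ (1 / (2 - p) * p) := by
      rw [← Real.rpow_mul hA.le]
    have e2 : (r:ℝ) ^ (n - 1 : ℕ) = r ^ ((n:ℝ) - 1) := by
      rw [← Real.rpow_natCast r (n-1), hcast]
    have e3 : r ^ ((n:ℝ)-1) / r ^ q = r ^ (((n:ℝ) - q) - 1) := by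
      rw [← Real.rpow_sub hr0]
      congr 1
      ring
    show r ^ (n - 1 : ℕ) * (((lam + r ^ (2 - q)) ^ (1 / (2 - p))) ^ p / r ^ q)
      = r ^ (((n:ℝ) - q) - 1) * (lam + r ^ (2 - q)) ^ (1 / (2 - p) * p)
    rw [e1, e2, ← e3]
    ring
  -- Step 3 : integration by parts
  have hibp := aux_ibp lam (α := 2 - q) (β := 1 / (2 - p) * p) (s := (n:ℝ) - q)
    hlam hα hbp hnq hdecay
  have hP : (∫ x : E, ((lam + ‖x‖ ^ (2 - q)) ^ (1 / (2 - p))) ^ p / ‖x‖ ^ q)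
      = (-((2 - q) * (1 / (2 - p) * p)) / ((n:ℝ) - q)) *
        ∫ x : E, ((lam + ‖x‖ ^ (2 - q)) ^ (1 / (2 - p))) ^ (2 * p - 2) / ‖x‖ ^ (2 * q - 2) := by
    rw [hPpolar, hRpolar, hibp]
    ring
  -- Step 4 : conclusion
  rw [hQ, hP]
  have hpne : p ≠ 0 := by linarith
  have hnqne : (n:ℝ) - q ≠ 0 := hnq.ne'
  have hconst : (((n:ℝ) - q) ^ 2 / p ^ 2) * (-((2 - q) * (1 / (2 - p) * p)) / ((n:ℝ) - q)) ^ 2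
      = ((2 - q) * (1 / (2 - p))) ^ 2 := by
    field_simp
  calc ((2 - q) * (1 / (2 - p))) ^ 2 *
        (∫ x : E, ((lam + ‖x‖ ^ (2 - q)) ^ (1 / (2 - p))) ^ (2 * p - 2) / ‖x‖ ^ (2 * q - 2)) *
        (∫ x : E, ((lam + ‖x‖ ^ (2 - q)) ^ (1 / (2 - p))) ^ (2 * p - 2) / ‖x‖ ^ (2 * q - 2))
      = (((n:ℝ) - q) ^ 2 / p ^ 2) * ((-((2 - q) * (1 / (2 - p) * p)) / ((n:ℝ) - q)) ^ 2 *
          (∫ x : E, ((lam + ‖x‖ ^ (2 - q)) ^ (1 / (2 - p))) ^ (2 * p - 2) / ‖x‖ ^ (2 * q - 2)) ^ 2) := by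
        rw [← mul_assoc, hconst]
        ring
    _ = (((n:ℝ) - q) ^ 2 / p ^ 2) *
        ((-((2 - q) * (1 / (2 - p) * p)) / ((n:ℝ) - q)) *
          ∫ x : E, ((lam + ‖x‖ ^ (2 - q)) ^ (1 / (2 - p))) ^ (2 * p - 2) / ‖x‖ ^ (2 * q - 2)) ^ 2 := by
        rw [mul_pow]
end
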